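/- (Conservation law for W_β, linear case f(u) = u.) Let β : ℝ³ → ℝ be a C² function with Δ_{H¹}β + β = 0, and let u be a C² solution of Δ_{H¹}u + u = 0 on an open set Ω ⊆ ℝ³. Define on Ω: W₁ = β(u_x + 2y·u_t) − u(β_x + 2y·β_t), W₂ = β(u_y − 2x·u_t) − u(β_y − 2x·β_t), W₃ = β[−2x·u_y + 2y·u_x + 4(x²+y²)u_t] + 2u[x·β_y − y·β_x − 2(x²+y²)β_t]. Then ∂W₁/∂x + ∂W₂/∂y + ∂W₃/∂t = 0 at every point of Ω. -/

import Mathlib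

/-- Partial derivative with respect to the first coordinate (x). -/
noncomputable def pdx (u : ℝ × ℝ × ℝ → ℝ) : ℝ × ℝ × ℝ → ℝ :=
  fun p => fderiv ℝ u p (1, 0, 0)

/-- Partial derivative with respect to the second coordinate (y). -/
noncomputable def pdy (u : ℝ × ℝ × ℝ → ℝ) : ℝ × ℝ × ℝ → ℝ :=
  fun p => fderiv ℝ u p (0, 1, 0)

/-- Partial derivative with respect to the third coordinate (t). -/
noncomputable def pdt (u : ℝ × ℝ × ℝ → ℝ) : ℝ × ℝ × ℝ → ℝ :=
  fun p => fderiv ℝ u p (0, 0, 1)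

/-- The Kohn–Laplace operator on the Heisenberg group H¹:
`Δ u = u_xx + u_yy + 4(x²+y²) u_tt + 4y u_xt − 4x u_yt`. -/
noncomputable def KohnLaplace (u : ℝ × ℝ × ℝ → ℝ) : ℝ × ℝ × ℝ → ℝ :=
  fun p => pdx (pdx u) p + pdy (pdy u) p
    + 4 * (p.1 ^ 2 + p.2.1 ^ 2) * pdt (pdt u) p
    + 4 * p.2.1 * pdt (pdx u) p - 4 * p.1 * pdt (pdy u) p

/-- conservation law for the Noether symmetry W_β of the linear
Kohn–Laplace equation: if Δ_{H¹}β + β = 0 and u is a C² solution of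
Δ_{H¹}u + u = 0 on an open set Ω, then Div(W) = 0 on Ω, where
W₁ = β(u_x + 2y u_t) − u(β_x + 2y β_t),
W₂ = β(u_y − 2x u_t) − u(β_y − 2x β_t),
W₃ = β(−2x u_y + 2y u_x + 4(x²+y²)u_t) + 2u(x β_y − y β_x − 2(x²+y²)β_t). -/
lemma hasFDerivAt_partial {f : ℝ × ℝ × ℝ → ℝ} {p : ℝ × ℝ × ℝ}
    (hf : DifferentiableAt ℝ (fderiv ℝ f) p) (v : ℝ × ℝ × ℝ) :
    HasFDerivAt (fun q => fderiv ℝ f q v)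
      ((ContinuousLinearMap.apply ℝ ℝ v).comp (fderiv ℝ (fderiv ℝ f) p)) p :=
  ((ContinuousLinearMap.apply ℝ ℝ v).hasFDerivAt).comp p hf.hasFDerivAt

theorem conservation_law_Wbeta_linear
    (β : ℝ × ℝ × ℝ → ℝ) (hβ : ContDiff ℝ 2 β)
    (hβeq : ∀ p : ℝ × ℝ × ℝ, KohnLaplace β p + β p = 0)
    (Ω : Set (ℝ × ℝ × ℝ)) (hΩ : IsOpen Ω)
    (u : ℝ × ℝ × ℝ → ℝ) (hu : ContDiffOn ℝ 2 u Ω)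
    (hsol : ∀ p ∈ Ω, KohnLaplace u p + u p = 0) :
    ∀ p ∈ Ω,
      pdx (fun q =>
        β q * (pdx u q + 2 * q.2.1 * pdt u q)
          - u q * (pdx β q + 2 * q.2.1 * pdt β q)) p
      + pdy (fun q =>
        β q * (pdy u q - 2 * q.1 * pdt u q)
          - u q * (pdy β q - 2 * q.1 * pdt β q)) p
      + pdt (fun q =>
        β q * (-2 * q.1 * pdy u q + 2 * q.2.1 * pdx u q
            + 4 * (q.1 ^ 2 + q.2.1 ^ 2) * pdt u q)
          + 2 * u q * (q.1 * pdy β q - q.2.1 * pdx β q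
            - 2 * (q.1 ^ 2 + q.2.1 ^ 2) * pdt β q)) p = 0 := by

  intro p hp
  have hΩp : Ω ∈ nhds p := hΩ.mem_nhds hp
  have hup : ContDiffAt ℝ 2 u p := hu.contDiffAt hΩp
  have hbp : ContDiffAt ℝ 2 β p := hβ.contDiffAt
  have hud : DifferentiableAt ℝ u p := hup.differentiableAt two_ne_zero
  have hbd : DifferentiableAt ℝ β p := hbp.differentiableAt two_ne_zero
  have hu2 : DifferentiableAt ℝ (fderiv ℝ u) p :=
    (hup.fderiv_right (m := 1) (by norm_num)).differentiableAt one_ne_zero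
  have hb2 : DifferentiableAt ℝ (fderiv ℝ β) p :=
    (hbp.fderiv_right (m := 1) (by norm_num)).differentiableAt one_ne_zero
  have symu : ∀ v w, fderiv ℝ (fderiv ℝ u) p v w = fderiv ℝ (fderiv ℝ u) p w v :=
    hup.isSymmSndFDerivAt minSmoothness_of_isRCLikeNormedField.le
  have symb : ∀ v w, fderiv ℝ (fderiv ℝ β) p v w = fderiv ℝ (fderiv ℝ β) p w v :=
    hbp.isSymmSndFDerivAt minSmoothness_of_isRCLikeNormedField.le
  have hpu : ∀ v : ℝ × ℝ × ℝ, HasFDerivAt (fun q => fderiv ℝ u q v)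
      ((ContinuousLinearMap.apply ℝ ℝ v).comp (fderiv ℝ (fderiv ℝ u) p)) p :=
    fun v => hasFDerivAt_partial hu2 v
  have hpb : ∀ v : ℝ × ℝ × ℝ, HasFDerivAt (fun q => fderiv ℝ β q v)
      ((ContinuousLinearMap.apply ℝ ℝ v).comp (fderiv ℝ (fderiv ℝ β) p)) p :=
    fun v => hasFDerivAt_partial hb2 v
  have hX : HasFDerivAt (fun q : ℝ × ℝ × ℝ => q.1)
      (ContinuousLinearMap.fst ℝ ℝ (ℝ × ℝ)) p := hasFDerivAt_fst
  have hY : HasFDerivAt (fun q : ℝ × ℝ × ℝ => q.2.1)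
      ((ContinuousLinearMap.fst ℝ ℝ ℝ).comp (ContinuousLinearMap.snd ℝ ℝ (ℝ × ℝ))) p :=
    hasFDerivAt_fst.comp p hasFDerivAt_snd
  have hX2 : HasFDerivAt (fun q : ℝ × ℝ × ℝ => q.1 ^ 2)
      (p.1 • ContinuousLinearMap.fst ℝ ℝ (ℝ × ℝ) + p.1 • ContinuousLinearMap.fst ℝ ℝ (ℝ × ℝ)) p := by
    simp only [pow_two]; exact hX.mul hX
  have hY2 : HasFDerivAt (fun q : ℝ × ℝ × ℝ => q.2.1 ^ 2)
      (p.2.1 • ((ContinuousLinearMap.fst ℝ ℝ ℝ).comp (ContinuousLinearMap.snd ℝ ℝ (ℝ × ℝ)))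
        + p.2.1 • ((ContinuousLinearMap.fst ℝ ℝ ℝ).comp (ContinuousLinearMap.snd ℝ ℝ (ℝ × ℝ)))) p := by
    simp only [pow_two]; exact hY.mul hY
  have hR := hX2.add hY2
  have hsolp := hsol p hp
  have hbep := hβeq p
  simp only [KohnLaplace, pdx, pdy, pdt] at hsolp hbep ⊢
  have hpux : HasFDerivAt (pdx u) ((ContinuousLinearMap.apply ℝ ℝ ((1:ℝ),(0:ℝ),(0:ℝ))).comp
      (fderiv ℝ (fderiv ℝ u) p)) p := hpu (1,0,0)
  have hpuy : HasFDerivAt (pdy u) ((ContinuousLinearMap.apply ℝ ℝ ((0:ℝ),(1:ℝ),(0:ℝ))).comp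
      (fderiv ℝ (fderiv ℝ u) p)) p := hpu (0,1,0)
  have hput : HasFDerivAt (pdt u) ((ContinuousLinearMap.apply ℝ ℝ ((0:ℝ),(0:ℝ),(1:ℝ))).comp
      (fderiv ℝ (fderiv ℝ u) p)) p := hpu (0,0,1)
  have hpbx : HasFDerivAt (pdx β) ((ContinuousLinearMap.apply ℝ ℝ ((1:ℝ),(0:ℝ),(0:ℝ))).comp
      (fderiv ℝ (fderiv ℝ β) p)) p := hpb (1,0,0)
  have hpby : HasFDerivAt (pdy β) ((ContinuousLinearMap.apply ℝ ℝ ((0:ℝ),(1:ℝ),(0:ℝ))).comp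
      (fderiv ℝ (fderiv ℝ β) p)) p := hpb (0,1,0)
  have hpbt : HasFDerivAt (pdt β) ((ContinuousLinearMap.apply ℝ ℝ ((0:ℝ),(0:ℝ),(1:ℝ))).comp
      (fderiv ℝ (fderiv ℝ β) p)) p := hpb (0,0,1)
  rw [hpux.fderiv, hpuy.fderiv, hput.fderiv] at hsolp
  rw [hpbx.fderiv, hpby.fderiv, hpbt.fderiv] at hbep
  simp only [ContinuousLinearMap.comp_apply, ContinuousLinearMap.apply_apply] at hsolp hbep
  have h1 := (hbd.hasFDerivAt.mul ((hpu (1,0,0)).add ((hY.const_mul 2).mul (hpu (0,0,1))))).sub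
    (hud.hasFDerivAt.mul ((hpb (1,0,0)).add ((hY.const_mul 2).mul (hpb (0,0,1)))))
  have h2 := (hbd.hasFDerivAt.mul ((hpu (0,1,0)).sub ((hX.const_mul 2).mul (hpu (0,0,1))))).sub
    (hud.hasFDerivAt.mul ((hpb (0,1,0)).sub ((hX.const_mul 2).mul (hpb (0,0,1)))))
  have h3 := (hbd.hasFDerivAt.mul ((((hX.const_mul (-2)).mul (hpu (0,1,0))).add
        ((hY.const_mul 2).mul (hpu (1,0,0)))).add ((hR.const_mul 4).mul (hpu (0,0,1))))).add
    ((hud.hasFDerivAt.const_mul 2).mul (((hX.mul (hpb (0,1,0))).sub (hY.mul (hpb (1,0,0)))).sub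
        ((hR.const_mul 2).mul (hpb (0,0,1)))))
  erw [h1.fderiv, h2.fderiv, h3.fderiv]
  simp only [ContinuousLinearMap.add_apply, ContinuousLinearMap.sub_apply,
    ContinuousLinearMap.smul_apply, ContinuousLinearMap.comp_apply,
    ContinuousLinearMap.apply_apply, ContinuousLinearMap.coe_fst', ContinuousLinearMap.coe_snd',
    smul_eq_mul, Function.comp]
  simp only [symu (1,0,0) (0,0,1), symu (0,1,0) (0,0,1),
    symb (1,0,0) (0,0,1), symb (0,1,0) (0,0,1)]
  norm_num
  linear_combination β p * hsolp - u p * hbep
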